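/- Let k be a field and B a finite left regular band monoid. The k-linear map θ : kB → k^B sending each basis element b ∈ B to the function c ↦ (1 if c*b = c, else 0) is a homomorphism of unital k-algebras, and its kernel equals the Jacobson radical of kB. Consequently kB modulo its Jacobson radical is isomorphic to a finite product of copies of k, indexed by the support semilattice Λ(B). -/

import Mathlib

/-!
Statement 18.  Let `k` be a field and `B` a finite left regular band monoid.  The
`k`-linear map `θ : kB → k^B` sending each basis element `b` to the indicator function
of `{c : c*b = c}` is a homomorphism of unital `k`-algebras whose kernel equals the
Jacobson radical of `kB`.  Consequently `kB` modulo its Jacobson radical is isomorphic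
to a finite product of copies of `k` indexed by the support semilattice `Λ(B)`
(equivalently, there is a surjective `k`-algebra map onto `k^{Λ(B)}` with kernel the
Jacobson radical, where `Λ(B)` is the quotient of `B` by `σ(a) = σ(b)`).
-/

theorem stmt18 (k B : Type*) [Field k] [Monoid B] [Fintype B] [DecidableEq B]
    (hidem : ∀ x : B, x * x = x) (hlrb : ∀ x y : B, x * y * x = x * y) :
    ∃ θ : MonoidAlgebra k B →ₐ[k] (B → k),
      (∀ b c : B, θ (MonoidAlgebra.single b 1) c = if c * b = c then (1 : k) else 0) ∧
      RingHom.ker θ = Ideal.jacobson (⊥ : Ideal (MonoidAlgebra k B)) ∧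
      ∃ ψ : MonoidAlgebra k B →ₐ[k] ((Quot (fun a b : B => a * b = a ∧ b * a = b)) → k),
        Function.Surjective ψ ∧
        RingHom.ker ψ = Ideal.jacobson (⊥ : Ideal (MonoidAlgebra k B)) := by
  classical
  -- Basic left-regular-band lemmas
  have key1 : ∀ a b c : B, c * (a * b) = c → c * a = c := by
    intro a b c h
    calc c * a = c * (a * b) * a := by rw [h]
    _ = c * (a * b * a) := by rw [mul_assoc]
    _ = c * (a * b) := by rw [hlrb]
    _ = c := h
  have key2 : ∀ a b c : B, c * (a * b) = c → c * b = c := by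
    intro a b c h
    calc c * b = c * (a * b) * b := by rw [h]
    _ = c * (a * b * b) := by rw [mul_assoc]
    _ = c * (a * (b * b)) := by rw [mul_assoc a b b]
    _ = c * (a * b) := by rw [hidem]
    _ = c := h
  have keyiff : ∀ a b c : B, c * (a * b) = c ↔ (c * a = c ∧ c * b = c) := by
    intro a b c
    refine ⟨fun h => ⟨key1 a b c h, key2 a b c h⟩, fun ⟨h1, h2⟩ => ?_⟩
    rw [← mul_assoc, h1, h2]
  -- The indicator monoid homomorphism
  set T : B →* (B → k) :=
    { toFun := fun b c => if c * b = c then (1 : k) else 0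
      map_one' := by funext c; simp
      map_mul' := by
        intro a b
        funext c
        by_cases h1 : c * a = c <;> by_cases h2 : c * b = c <;>
          simp [Pi.mul_apply, keyiff a b c, h1, h2] } with hT
  set θ := MonoidAlgebra.lift k (B → k) B T with hθ
  have prop1 : ∀ b c : B, θ (MonoidAlgebra.single b 1) c
      = if c * b = c then (1 : k) else 0 := by
    intro b c
    rw [hθ, MonoidAlgebra.lift_single, one_smul]
    rfl
  have thetaApply : ∀ (x : MonoidAlgebra k B) (c : B),
      θ x c = ∑ b ∈ Finset.univ.filter (fun b => c * b = c), x.coeff b := by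
    intro x c
    rw [hθ, MonoidAlgebra.lift_apply, Finsupp.sum_fintype _ _ (by intro b; simp),
      Finset.sum_apply, Finset.sum_filter]
    refine Finset.sum_congr rfl fun b _ => ?_
    by_cases h : c * b = c <;> simp [h, hT]
  -- the counting measure
  set m : B → ℕ := fun b => (Finset.univ.filter fun c => c * b = c).card with hm
  have m_pos : ∀ b, 0 < m b := by
    intro b
    refine Finset.card_pos.mpr ⟨b, ?_⟩
    simp [hidem b]
  have m_le : ∀ b, m b ≤ Fintype.card B := fun b => Finset.card_filter_le _ _
  have m_lt : ∀ p b : B, p * b ≠ p → m (p * b) < m p := by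
    intro p b hpb
    apply Finset.card_lt_card
    rw [Finset.ssubset_def]
    constructor
    · intro c hc
      simp only [Finset.mem_filter, Finset.mem_univ, true_and] at hc ⊢
      exact key1 p b c hc
    · intro hsub
      have hp : p ∈ Finset.univ.filter fun c => c * p = c := by simp [hidem p]
      have := hsub hp
      simp only [Finset.mem_filter, Finset.mem_univ, true_and] at this
      rw [← mul_assoc, hidem p] at this
      exact hpb this
  -- filtration
  set V : ℕ → Submodule k (MonoidAlgebra k B) :=
    fun n => Submodule.span k ((fun b => MonoidAlgebra.single b (1:k)) '' {b | m b ≤ n}) with hV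
  have V_mono : ∀ {n n' : ℕ}, n ≤ n' → V n ≤ V n' := by
    intro n n' h
    exact Submodule.span_mono (Set.image_mono fun b hb => le_trans hb h)
  have decomp : ∀ x : MonoidAlgebra k B, x = ∑ b : B, MonoidAlgebra.single b (x.coeff b) := by
    intro x
    conv_lhs => rw [← MonoidAlgebra.sum_coeff_single x]
    rw [Finsupp.sum_fintype]
    intro b; simp
  have mem_V_card : ∀ x : MonoidAlgebra k B, x ∈ V (Fintype.card B) := by
    intro x
    rw [decomp x]
    refine Submodule.sum_mem _ fun b _ => ?_
    have hsm : MonoidAlgebra.single b (x.coeff b) = x.coeff b • MonoidAlgebra.single b (1:k) := by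
      rw [MonoidAlgebra.smul_single', mul_one]
    rw [hsm]
    exact Submodule.smul_mem _ _ (Submodule.subset_span ⟨b, m_le b, rfl⟩)
  have stepA : ∀ x : MonoidAlgebra k B, θ x = 0 → ∀ p : B,
      MonoidAlgebra.single p (1:k) * x ∈ V (m p - 1) := by
    intro x hx p
    have hmul : MonoidAlgebra.single p (1:k) * x
        = ∑ b : B, MonoidAlgebra.single (p * b) (x.coeff b) := by
      conv_lhs => rw [decomp x]
      rw [Finset.mul_sum]
      exact Finset.sum_congr rfl fun b _ => by
        rw [MonoidAlgebra.single_mul_single, one_mul]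
    rw [hmul, ← Finset.sum_filter_add_sum_filter_not Finset.univ (fun b => p * b = p)]
    have h1 : ∑ b ∈ Finset.univ.filter (fun b => p * b = p),
        MonoidAlgebra.single (p * b) (x.coeff b) = 0 := by
      have e1 : ∑ b ∈ Finset.univ.filter (fun b => p * b = p),
          MonoidAlgebra.single (p * b) (x.coeff b)
          = MonoidAlgebra.singleAddHom p (∑ b ∈ Finset.univ.filter (fun b => p * b = p), x.coeff b) := by
        rw [map_sum]
        refine Finset.sum_congr rfl fun b hb => ?_
        simp only [Finset.mem_filter, Finset.mem_univ, true_and] at hb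
        rw [hb]
        rfl
      have e2 : ∑ b ∈ Finset.univ.filter (fun b => p * b = p), x.coeff b = 0 := by
        rw [← thetaApply x p, hx]
        rfl
      rw [e1, e2, map_zero]
    rw [h1, zero_add]
    refine Submodule.sum_mem _ fun b hb => ?_
    simp only [Finset.mem_filter, Finset.mem_univ, true_and] at hb
    have hsm : MonoidAlgebra.single (p * b) (x.coeff b)
        = x.coeff b • MonoidAlgebra.single (p * b) (1:k) := by
      rw [MonoidAlgebra.smul_single', mul_one]
    rw [hsm]
    refine Submodule.smul_mem _ _ (Submodule.subset_span ⟨p * b, ?_, rfl⟩)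
    have := m_lt p b hb
    simp only [Set.mem_setOf_eq]
    omega
  have stepB : ∀ (n : ℕ) (x : MonoidAlgebra k B), θ x = 0 →
      ∀ y ∈ V n, y * x ∈ V (n - 1) := by
    intro n x hx y hy
    have hle : V n ≤ (V (n - 1)).comap (LinearMap.mulRight k x) := by
      simp only [hV]
      refine Submodule.span_le.mpr ?_
      rintro _ ⟨b, hb, rfl⟩
      simp only [Set.mem_setOf_eq] at hb
      simp only [SetLike.mem_coe, Submodule.mem_comap, LinearMap.mulRight_apply]
      exact V_mono (by omega : m b - 1 ≤ n - 1) (stepA x hx b)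
    exact hle hy
  have nilp : ∀ x : MonoidAlgebra k B, θ x = 0 → x ^ (Fintype.card B + 1) = 0 := by
    intro x hx
    have haux : ∀ j : ℕ, x ^ (j + 1) ∈ V (Fintype.card B - j) := by
      intro j
      induction j with
      | zero => simpa using mem_V_card x
      | succ j ih =>
        have h := stepB (Fintype.card B - j) x hx _ ih
        rw [pow_succ]
        have : Fintype.card B - j - 1 = Fintype.card B - (j + 1) := by omega
        rwa [this] at h
    have h0 : x ^ (Fintype.card B + 1) ∈ V 0 := by
      simpa using haux (Fintype.card B)
    have hempty : {b : B | m b ≤ 0} = ∅ := by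
      ext b
      simp only [Set.mem_setOf_eq, Set.mem_empty_iff_false, iff_false]
      intro h
      have := m_pos b
      omega
    have hV0 : V 0 = ⊥ := by
      simp only [hV, hempty, Set.image_empty, Submodule.span_empty]
    rw [hV0] at h0
    simpa using h0
  -- kernel is a two-sided ideal consisting of elements with nilpotent multiples
  have kerθ_le_jac : RingHom.ker θ ≤ Ideal.jacobson (⊥ : Ideal (MonoidAlgebra k B)) := by
    intro x hx
    rw [RingHom.mem_ker] at hx
    rw [Ideal.jacobson]
    rw [Ideal.mem_sInf]
    rintro J ⟨-, hJ⟩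
    by_contra hxJ
    have hlt : J < J ⊔ Ideal.span {x} := by
      refine lt_of_le_of_ne le_sup_left fun h => hxJ ?_
      have : x ∈ J ⊔ Ideal.span {x} :=
        Submodule.mem_sup_right (Submodule.mem_span_singleton_self x)
      rwa [← h] at this
    have htop : J ⊔ Ideal.span {x} = ⊤ := hJ.out.2 _ hlt
    have h1 : (1 : MonoidAlgebra k B) ∈ J ⊔ Ideal.span {x} := by
      rw [htop]; trivial
    obtain ⟨j, hj, s, hs, hjs⟩ := Submodule.mem_sup.mp h1
    obtain ⟨r, hr⟩ := Submodule.mem_span_singleton.mp hs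
    have hrx : θ (r * x) = 0 := by
      rw [map_mul, hx, mul_zero]
    have hnil : IsNilpotent (r * x) := ⟨Fintype.card B + 1, nilp _ hrx⟩
    have hju : IsUnit j := by
      have : j = 1 - r * x := by
        rw [← hjs, ← hr]
        simp [smul_eq_mul]
      rw [this]
      exact hnil.isUnit_one_sub
    exact hJ.ne_top (J.eq_top_of_isUnit_mem hj hju)
  have jac_le_kerθ : Ideal.jacobson (⊥ : Ideal (MonoidAlgebra k B)) ≤ RingHom.ker θ := by
    intro x hx
    rw [RingHom.mem_ker]
    funext c
    have hsurj : Function.Surjective ((Pi.evalAlgHom k (fun _ : B => k) c).comp θ) := by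
      intro a
      refine ⟨algebraMap k _ a, ?_⟩
      rw [AlgHom.commutes]
      rfl
    have hmax : (RingHom.ker ((Pi.evalAlgHom k (fun _ : B => k) c).comp θ)).IsMaximal :=
      RingHom.ker_isMaximal_of_surjective _ hsurj
    rw [Ideal.jacobson, Ideal.mem_sInf] at hx
    have hxc := hx (I := RingHom.ker ((Pi.evalAlgHom k (fun _ : B => k) c).comp θ))
      ⟨bot_le, hmax⟩
    rw [RingHom.mem_ker] at hxc
    simpa using hxc
  have kerθ_eq : RingHom.ker θ = Ideal.jacobson (⊥ : Ideal (MonoidAlgebra k B)) :=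
    le_antisymm kerθ_le_jac jac_le_kerθ
  -- The support semilattice
  set r : B → B → Prop := fun a b => a * b = a ∧ b * a = b with hrdef
  have requiv : Equivalence r := by
    constructor
    · intro a; exact ⟨hidem a, hidem a⟩
    · rintro a b ⟨h1, h2⟩; exact ⟨h2, h1⟩
    · rintro a b c ⟨hab, hba⟩ ⟨hbc, hcb⟩
      constructor
      · calc a * c = a * b * c := by rw [hab]
        _ = a * (b * c) := by rw [mul_assoc]
        _ = a * b := by rw [hbc]
        _ = a := hab
      · calc c * a = c * b * a := by rw [hcb]
        _ = c * (b * a) := by rw [mul_assoc]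
        _ = c * b := by rw [hba]
        _ = c := hcb
  have out_rel : ∀ c : B, r (Quot.out (Quot.mk r c)) c := by
    intro c
    have h : Quot.mk r (Quot.out (Quot.mk r c)) = Quot.mk r c := Quot.out_eq _
    exact requiv.eqvGen_iff.mp (Quot.eq.mp h)
  -- invariance lemmas
  have Tinv : ∀ b c c' : B, r c c' → (c * b = c ↔ c' * b = c') := by
    intro b c c' ⟨h1, h2⟩
    constructor
    · intro h
      calc c' * b = c' * c * b := by rw [h2]
      _ = c' * (c * b) := by rw [mul_assoc]
      _ = c' * c := by rw [h]
      _ = c' := h2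
    · intro h
      calc c * b = c * c' * b := by rw [h1]
      _ = c * (c' * b) := by rw [mul_assoc]
      _ = c * c' := by rw [h]
      _ = c := h1
  have θinv : ∀ (x : MonoidAlgebra k B) (c c' : B), r c c' → θ x c = θ x c' := by
    intro x c c' hcc
    rw [thetaApply, thetaApply]
    congr 1
    ext b
    simp only [Finset.mem_filter, Finset.mem_univ, true_and]
    exact Tinv b c c' hcc
  -- the algebra map onto functions on the quotient
  set ψ : MonoidAlgebra k B →ₐ[k] ((Quot r) → k) :=
    Pi.algHom k (fun _ : Quot r => k) (fun q => (Pi.evalAlgHom k (fun _ : B => k) (Quot.out q)).comp θ) with hψ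
  have ψapp : ∀ (x : MonoidAlgebra k B) (q : Quot r), ψ x q = θ x (Quot.out q) := by
    intro x q; rfl
  refine ⟨θ, prop1, kerθ_eq, ψ, ?_, ?_⟩
  · -- surjectivity
    haveI : Fintype (Quot r) := Fintype.ofSurjective _ (Quot.mk_surjective)
    set M : Quot r → ℕ := fun q => m (Quot.out q) with hM
    have Mle : ∀ q q' : Quot r, Quot.out q' * Quot.out q = Quot.out q' → M q' ≤ M q := by
      intro q q' h
      refine Finset.card_le_card fun c hc => ?_
      simp only [Finset.mem_filter, Finset.mem_univ, true_and] at hc ⊢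
      calc c * Quot.out q = c * Quot.out q' * Quot.out q := by rw [hc]
      _ = c * (Quot.out q' * Quot.out q) := by rw [mul_assoc]
      _ = c * Quot.out q' := by rw [h]
      _ = c := hc
    have Meq : ∀ q q' : Quot r, Quot.out q' * Quot.out q = Quot.out q' → M q' = M q →
        q = q' := by
      intro q q' h hMeq
      have hsub : (Finset.univ.filter fun c => c * Quot.out q' = c)
          ⊆ (Finset.univ.filter fun c => c * Quot.out q = c) := by
        intro c hc
        simp only [Finset.mem_filter, Finset.mem_univ, true_and] at hc ⊢
        calc c * Quot.out q = c * Quot.out q' * Quot.out q := by rw [hc]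
        _ = c * (Quot.out q' * Quot.out q) := by rw [mul_assoc]
        _ = c * Quot.out q' := by rw [h]
        _ = c := hc
      have hseq : (Finset.univ.filter fun c => c * Quot.out q' = c)
          = (Finset.univ.filter fun c => c * Quot.out q = c) :=
        Finset.eq_of_subset_of_card_le hsub (le_of_eq hMeq.symm)
      have hqin : Quot.out q ∈ Finset.univ.filter fun c => c * Quot.out q = c := by
        simp [hidem]
      rw [← hseq] at hqin
      simp only [Finset.mem_filter, Finset.mem_univ, true_and] at hqin
      have hrel : r (Quot.out q) (Quot.out q') := ⟨hqin, h⟩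
      calc q = Quot.mk r (Quot.out q) := (Quot.out_eq q).symm
      _ = Quot.mk r (Quot.out q') := Quot.sound hrel
      _ = q' := Quot.out_eq q'
    have main : ∀ (n : ℕ) (g : Quot r → k), (∀ q, g q ≠ 0 → M q < n) → ∃ x, ψ x = g := by
      intro n
      induction n with
      | zero =>
        intro g hg
        refine ⟨0, ?_⟩
        rw [map_zero]
        funext q
        by_contra h
        exact absurd (hg q fun h' => h (h'.symm ▸ rfl)) (Nat.not_lt_zero _)
      | succ n ih =>
        intro g hg
        set s : Finset (Quot r) := Finset.univ.filter (fun q => M q = n) with hs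
        set g' : Quot r → k := fun q' => g q' -
          ∑ q ∈ s, g q * (if Quot.out q' * Quot.out q = Quot.out q' then (1:k) else 0)
          with hg'
        have hg'small : ∀ q', g' q' ≠ 0 → M q' < n := by
          intro q' hq'
          by_contra hge
          push_neg at hge
          apply hq'
          rcases eq_or_lt_of_le hge with heq | hgt
          · -- M q' = n
            have : ∑ q ∈ s, g q *
                (if Quot.out q' * Quot.out q = Quot.out q' then (1:k) else 0) = g q' := by
              rw [Finset.sum_eq_single q']
              · simp [hidem]
              · intro q hq hne
                simp only [hs, Finset.mem_filter, Finset.mem_univ, true_and] at hq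
                have hcond : ¬(Quot.out q' * Quot.out q = Quot.out q') := by
                  intro hc
                  exact hne (Meq q q' hc (by omega))
                simp [hcond]
              · intro hq'
                exfalso
                apply hq'
                simp [hs, ← heq]
            simp only [hg', this, sub_self]
          · -- M q' > n
            have hgq' : g q' = 0 := by
              by_contra hne
              have := hg q' hne
              omega
            have hzero : ∀ q ∈ s, g q *
                (if Quot.out q' * Quot.out q = Quot.out q' then (1:k) else 0) = 0 := by
              intro q hq
              simp only [hs, Finset.mem_filter, Finset.mem_univ, true_and] at hq
              have hcond : ¬(Quot.out q' * Quot.out q = Quot.out q') := by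
                intro hc
                have := Mle q q' hc
                omega
              simp [hcond]
            simp only [hg', hgq', Finset.sum_congr rfl hzero, Finset.sum_const_zero, sub_self]
        obtain ⟨x', hx'⟩ := ih g' hg'small
        refine ⟨x' + ∑ q ∈ s, g q • MonoidAlgebra.single (Quot.out q) (1:k), ?_⟩
        rw [map_add, map_sum, hx']
        funext q'
        simp only [Pi.add_apply, Finset.sum_apply]
        have hterm : ∀ q ∈ s, (ψ (g q • MonoidAlgebra.single (Quot.out q) (1:k))) q'
            = g q * (if Quot.out q' * Quot.out q = Quot.out q' then (1:k) else 0) := by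
          intro q _
          rw [map_smul]
          simp only [Pi.smul_apply, smul_eq_mul]
          rw [ψapp, prop1]
        rw [Finset.sum_congr rfl hterm]
        simp only [hg']
        ring
    intro g
    obtain ⟨x, hx⟩ := main (Fintype.card B + 1) g (fun q _ => by
      have := m_le (Quot.out q)
      simp only [hM]
      omega)
    exact ⟨x, hx⟩
  · -- kernel of ψ
    rw [← kerθ_eq]
    apply le_antisymm
    · intro x hx
      rw [RingHom.mem_ker] at hx ⊢
      funext c
      have h1 : θ x c = θ x (Quot.out (Quot.mk r c)) := (θinv x _ _ (out_rel c)).symm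
      have h2 : θ x (Quot.out (Quot.mk r c)) = ψ x (Quot.mk r c) := (ψapp x _).symm
      rw [h1, h2, hx]
      rfl
    · intro x hx
      rw [RingHom.mem_ker] at hx ⊢
      funext q
      rw [ψapp, hx]
      rfl
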